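/- Under the hypotheses of the previous statement (θ − τ⊗τ is p-positive semi-definite), for every (p−1)-form ξ and every p-form f in the image of F_θ one has ⟨F_θ^{-1} f, τ ∧ ξ⟩ ≤ ⟨F_θ^{-1} f, f⟩^{1/2} |ξ|, where F_θ^{-1} is the inverse of F_θ restricted to its image. In particular ⟨F_θ^{-1}(τ ∧ ξ), τ ∧ ξ⟩ ≤ |ξ|². -/

import Mathlib

/-- The operator `F_θ = Σ θ_{jk} ω^k ∧ (e_j ⌟ ·)` on coefficient arrays of `p`-forms. -/
def FopMat {n p : ℕ} (θ : Matrix (Fin n) (Fin n) ℝ)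
    (g : (Fin p → Fin n) → ℝ) : (Fin p → Fin n) → ℝ :=
  fun J => ∑ a : Fin p, ∑ i : Fin n, θ (J a) i * g (Function.update J a i)

/-- `g` is the fully antisymmetric coefficient array of a form. -/
def IsAlt {n p : ℕ} (g : (Fin p → Fin n) → ℝ) : Prop :=
  ∀ (J : Fin p → Fin n) (σ : Equiv.Perm (Fin p)),
    g (J ∘ σ) = ((Equiv.Perm.sign σ : ℤ) : ℝ) * g J

/-- Coefficients of the wedge product `τ ∧ ξ`. -/
def wedge1 {n m : ℕ} (τ : Fin n → ℝ) (ξ : (Fin m → Fin n) → ℝ) :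
    (Fin (m + 1) → Fin n) → ℝ :=
  fun J => ∑ a : Fin (m + 1), (-1 : ℝ) ^ (a : ℕ) * τ (J a) * ξ (fun b => J (a.succAbove b))

/-- The inner product of `p`-forms making the increasing-multi-index basis forms
orthonormal, written via a sum over all multi-indices. -/
noncomputable def innerF {n p : ℕ} (f g : (Fin p → Fin n) → ℝ) : ℝ :=
  ((Nat.factorial p : ℝ))⁻¹ * ∑ J : Fin p → Fin n, f J * g J

/- ============================ auxiliary material ============================ -/

/-- Contraction (interior product) of a `(M+1)`-form with a vector. -/
def ctr {n M : ℕ} (w : Fin n → ℝ) (g : (Fin (M + 1) → Fin n) → ℝ) :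
    (Fin M → Fin n) → ℝ :=
  fun K => ∑ j, w j * g (Fin.cons j K)

lemma IsAlt.swap {n p : ℕ} {g : (Fin p → Fin n) → ℝ} (hg : IsAlt g)
    (J : Fin p → Fin n) (i j : Fin p) (hij : i ≠ j) :
    g (J ∘ Equiv.swap i j) = - g J := by
  have := hg J (Equiv.swap i j)
  rw [Equiv.Perm.sign_swap hij] at this
  simpa using this

lemma isAlt_of_adjSwap {n p : ℕ} (g : (Fin (p + 1) → Fin n) → ℝ)
    (hs : ∀ (J : Fin (p + 1) → Fin n) (t : Fin p),
      g (J ∘ Equiv.swap t.castSucc t.succ) = - g J) :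
    IsAlt g := by
  intro J σ
  revert J
  have hσ : σ ∈ Submonoid.closure
      (Set.range fun i : Fin p => Equiv.swap i.castSucc i.succ) := by
    rw [Equiv.Perm.mclosure_swap_castSucc_succ]; trivial
  induction hσ using Submonoid.closure_induction with
  | mem x hx =>
    obtain ⟨t, rfl⟩ := hx
    intro J
    rw [hs J t, Equiv.Perm.sign_swap (Fin.castSucc_lt_succ (i := t)).ne]
    simp
  | one => simp
  | mul x y hx hy ihx ihy =>
    intro J
    have h2 : J ∘ ⇑(x * y) = (J ∘ ⇑x) ∘ ⇑y := rfl
    rw [h2, ihy, ihx, map_mul]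
    push_cast
    ring

lemma neg_one_pow_mul_self (a : ℕ) : (-1 : ℝ) ^ a * (-1 : ℝ) ^ a = 1 := by
  rw [← pow_add, ← two_mul, pow_mul]
  norm_num

lemma insertNth_eq_cons_comp_cycleRange {n M : ℕ} (a : Fin (M + 1)) (j : Fin n)
    (K : Fin M → Fin n) :
    a.insertNth j K = (Fin.cons j K : Fin (M + 1) → Fin n) ∘ a.cycleRange := by
  funext i
  by_cases h : i = a
  · subst h
    simp [Fin.insertNth_apply_same, Fin.cycleRange_self]
  · obtain ⟨b, rfl⟩ := Fin.exists_succAbove_eq h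
    simp [Fin.insertNth_apply_succAbove, Fin.cycleRange_succAbove]

lemma isAlt_apply_insertNth {n M : ℕ} {G : (Fin (M + 1) → Fin n) → ℝ} (hG : IsAlt G)
    (a : Fin (M + 1)) (j : Fin n) (K : Fin M → Fin n) :
    G (a.insertNth j K) = (-1 : ℝ) ^ (a : ℕ) * G (Fin.cons j K) := by
  rw [insertNth_eq_cons_comp_cycleRange, hG _ a.cycleRange, Fin.sign_cycleRange]
  push_cast
  ring

lemma sum_insertNth {n M : ℕ} (a : Fin (M + 1)) (F : (Fin (M + 1) → Fin n) → ℝ) :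
    ∑ J : Fin (M + 1) → Fin n, F J
      = ∑ j : Fin n, ∑ K : Fin M → Fin n, F (a.insertNth j K) := by
  rw [← (Fin.insertNthEquiv (fun _ => Fin n) a).sum_comp F, Fintype.sum_prod_type]
  rfl

lemma adjoint_wedge {n M : ℕ} (w : Fin n → ℝ) (ξ : (Fin M → Fin n) → ℝ)
    (G : (Fin (M + 1) → Fin n) → ℝ) (hG : IsAlt G) :
    ∑ J : Fin (M + 1) → Fin n, wedge1 w ξ J * G J
      = (M + 1 : ℝ) * ∑ K : Fin M → Fin n, ξ K * ctr w G K := by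
  unfold wedge1
  simp_rw [Finset.sum_mul]
  rw [Finset.sum_comm]
  have key : ∀ a : Fin (M + 1),
      (∑ J : Fin (M + 1) → Fin n,
          (-1 : ℝ) ^ (a : ℕ) * w (J a) * ξ (fun b => J (a.succAbove b)) * G J)
        = ∑ K : Fin M → Fin n, ξ K * ctr w G K := by
    intro a
    rw [sum_insertNth a]
    have step : ∀ (j : Fin n) (K : Fin M → Fin n),
        (-1 : ℝ) ^ (a : ℕ) * w ((a.insertNth j K : Fin (M + 1) → Fin n) a)
            * ξ (fun b => (a.insertNth j K : Fin (M + 1) → Fin n) (a.succAbove b))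
            * G (a.insertNth j K)
          = ξ K * (w j * G (Fin.cons j K)) := by
      intro j K
      rw [isAlt_apply_insertNth hG, Fin.insertNth_apply_same]
      have : (fun b => (a.insertNth j K : Fin (M + 1) → Fin n) (a.succAbove b)) = K := by
        funext b; exact Fin.insertNth_apply_succAbove (α := fun _ => Fin n) a j K b
      rw [this, show (-1 : ℝ) ^ (a : ℕ) * w j * ξ K
          * ((-1 : ℝ) ^ (a : ℕ) * G (Fin.cons j K))
        = ((-1 : ℝ) ^ (a : ℕ) * (-1 : ℝ) ^ (a : ℕ)) * (ξ K * (w j * G (Fin.cons j K)))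
        from by ring, neg_one_pow_mul_self, one_mul]
    simp_rw [step]
    rw [Finset.sum_comm]
    simp_rw [← Finset.mul_sum]
    rfl
  simp_rw [key]
  rw [Finset.sum_const, Finset.card_univ, Fintype.card_fin, nsmul_eq_mul]
  push_cast
  ring

lemma update_insertNth {n M : ℕ} (a : Fin (M + 1)) (j i : Fin n) (K : Fin M → Fin n) :
    Function.update (a.insertNth j K : Fin (M + 1) → Fin n) a i = a.insertNth i K := by
  funext x
  by_cases h : x = a
  · subst h
    rw [Function.update_self, Fin.insertNth_apply_same]
  · obtain ⟨b, rfl⟩ := Fin.exists_succAbove_eq h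
    rw [Function.update_of_ne h,
      Fin.insertNth_apply_succAbove (α := fun _ => Fin n) a j K b,
      Fin.insertNth_apply_succAbove (α := fun _ => Fin n) a i K b]

lemma quadform {n M : ℕ} (A : Matrix (Fin n) (Fin n) ℝ)
    (g : (Fin (M + 1) → Fin n) → ℝ) (hg : IsAlt g) :
    ∑ J : Fin (M + 1) → Fin n, FopMat A g J * g J
      = (M + 1 : ℝ) * ∑ K : Fin M → Fin n, ∑ j : Fin n, ∑ i : Fin n,
          A j i * g (Fin.cons j K) * g (Fin.cons i K) := by
  unfold FopMat
  simp_rw [Finset.sum_mul]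
  rw [Finset.sum_comm]
  have key : ∀ a : Fin (M + 1),
      (∑ J : Fin (M + 1) → Fin n, ∑ i : Fin n, A (J a) i * g (Function.update J a i) * g J)
        = ∑ K : Fin M → Fin n, ∑ j : Fin n, ∑ i : Fin n,
            A j i * g (Fin.cons j K) * g (Fin.cons i K) := by
    intro a
    rw [sum_insertNth a]
    have step : ∀ (j : Fin n) (K : Fin M → Fin n) (i : Fin n),
        A ((a.insertNth j K : Fin (M + 1) → Fin n) a) i
            * g (Function.update (a.insertNth j K : Fin (M + 1) → Fin n) a i)
            * g (a.insertNth j K)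
          = A j i * g (Fin.cons j K) * g (Fin.cons i K) := by
      intro j K i
      rw [Fin.insertNth_apply_same, update_insertNth, isAlt_apply_insertNth hg,
        isAlt_apply_insertNth hg, show A j i * ((-1 : ℝ) ^ (a : ℕ) * g (Fin.cons i K))
          * ((-1 : ℝ) ^ (a : ℕ) * g (Fin.cons j K))
        = ((-1 : ℝ) ^ (a : ℕ) * (-1 : ℝ) ^ (a : ℕ))
            * (A j i * g (Fin.cons j K) * g (Fin.cons i K)) from by ring,
        neg_one_pow_mul_self, one_mul]
    simp_rw [step]
    rw [Finset.sum_comm]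
  simp_rw [key]
  rw [Finset.sum_const, Finset.card_univ, Fintype.card_fin, nsmul_eq_mul]
  push_cast
  ring

lemma swap_comp_succAbove_castSucc {M : ℕ} (t : Fin M) (c : Fin M) :
    Equiv.swap t.castSucc t.succ (t.castSucc.succAbove c) = t.succ.succAbove c := by
  rcases lt_trichotomy (c : ℕ) (t : ℕ) with hlt | heq | hgt
  · rw [Fin.succAbove_of_castSucc_lt _ _
        (by simp only [Fin.lt_def, Fin.coe_castSucc]; omega),
      Fin.succAbove_of_castSucc_lt _ _
        (by simp only [Fin.lt_def, Fin.coe_castSucc, Fin.val_succ]; omega),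
      Equiv.swap_apply_of_ne_of_ne
        (Fin.ne_of_val_ne (by simp only [Fin.coe_castSucc]; omega))
        (Fin.ne_of_val_ne (by simp only [Fin.coe_castSucc, Fin.val_succ]; omega))]
  · have hct : c = t := Fin.ext heq
    subst hct
    rw [Fin.succAbove_of_le_castSucc _ _ (le_refl c.castSucc),
      Fin.succAbove_of_castSucc_lt _ _ (Fin.castSucc_lt_succ (i := c)),
      Equiv.swap_apply_right]
  · rw [Fin.succAbove_of_le_castSucc _ _
        (by simp only [Fin.le_def, Fin.coe_castSucc]; omega),
      Fin.succAbove_of_le_castSucc _ _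
        (by simp only [Fin.le_def, Fin.coe_castSucc, Fin.val_succ]; omega),
      Equiv.swap_apply_of_ne_of_ne
        (Fin.ne_of_val_ne (by simp only [Fin.coe_castSucc, Fin.val_succ]; omega))
        (Fin.ne_of_val_ne (by simp only [Fin.val_succ]; omega))]

lemma swap_comp_succAbove_succ {M : ℕ} (t : Fin M) (c : Fin M) :
    Equiv.swap t.castSucc t.succ (t.succ.succAbove c) = t.castSucc.succAbove c := by
  calc Equiv.swap t.castSucc t.succ (t.succ.succAbove c)
      = Equiv.swap t.castSucc t.succ
          (Equiv.swap t.castSucc t.succ (t.castSucc.succAbove c)) := by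
        rw [swap_comp_succAbove_castSucc]
    _ = t.castSucc.succAbove c := Equiv.swap_apply_self _ _ _

lemma wedge1_term_swap {n M : ℕ} (w : Fin n → ℝ) {ξ : (Fin M → Fin n) → ℝ}
    (hξ : IsAlt ξ) (J : Fin (M + 1) → Fin n) (t : Fin M) (a : Fin (M + 1)) :
    (-1 : ℝ) ^ (a : ℕ) * w ((J ∘ Equiv.swap t.castSucc t.succ) a)
        * ξ (fun b => (J ∘ Equiv.swap t.castSucc t.succ) (a.succAbove b))
      = -((-1 : ℝ) ^ ((Equiv.swap t.castSucc t.succ a : Fin (M + 1)) : ℕ)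
          * w (J (Equiv.swap t.castSucc t.succ a))
          * ξ (fun b => J ((Equiv.swap t.castSucc t.succ a).succAbove b))) := by
  simp only [Function.comp_apply]
  by_cases h1 : a = t.castSucc
  · subst h1
    have hsa : Equiv.swap t.castSucc t.succ t.castSucc = t.succ := Equiv.swap_apply_left _ _
    have harg : (fun b => J (Equiv.swap t.castSucc t.succ (t.castSucc.succAbove b)))
        = fun b => J (t.succ.succAbove b) := by
      funext b
      rw [swap_comp_succAbove_castSucc]
    rw [hsa, harg, Fin.coe_castSucc, Fin.val_succ, pow_succ]
    ring
  · by_cases h2 : a = t.succ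
    · subst h2
      have hsa : Equiv.swap t.castSucc t.succ t.succ = t.castSucc := Equiv.swap_apply_right _ _
      have harg : (fun b => J (Equiv.swap t.castSucc t.succ (t.succ.succAbove b)))
          = fun b => J (t.castSucc.succAbove b) := by
        funext b
        rw [swap_comp_succAbove_succ]
      rw [hsa, harg, Fin.coe_castSucc, Fin.val_succ, pow_succ]
      ring
    · have hsa : Equiv.swap t.castSucc t.succ a = a := Equiv.swap_apply_of_ne_of_ne h1 h2
      obtain ⟨p, hp⟩ := Fin.exists_succAbove_eq (Ne.symm h1)
      obtain ⟨q, hq⟩ := Fin.exists_succAbove_eq (Ne.symm h2)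
      have hpq : p ≠ q := by
        intro hyp
        apply (Fin.castSucc_lt_succ (i := t)).ne
        rw [← hp, ← hq, hyp]
      have harg : (fun b => J (Equiv.swap t.castSucc t.succ (a.succAbove b)))
          = (fun b => J (a.succAbove b)) ∘ Equiv.swap p q := by
        funext b
        by_cases hb1 : b = p
        · subst hb1
          show J (Equiv.swap t.castSucc t.succ (a.succAbove b))
            = J (a.succAbove (Equiv.swap b q b))
          rw [Equiv.swap_apply_left, hp, hq, Equiv.swap_apply_left]
        · by_cases hb2 : b = q
          · subst hb2
            show J (Equiv.swap t.castSucc t.succ (a.succAbove b))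
              = J (a.succAbove (Equiv.swap p b b))
            rw [Equiv.swap_apply_right, hp, hq, Equiv.swap_apply_right]
          · show J (Equiv.swap t.castSucc t.succ (a.succAbove b))
              = J (a.succAbove (Equiv.swap p q b))
            rw [Equiv.swap_apply_of_ne_of_ne hb1 hb2,
              Equiv.swap_apply_of_ne_of_ne
                (fun hyp => hb1 (Fin.succAbove_right_injective (p := a) (hp ▸ hyp)))
                (fun hyp => hb2 (Fin.succAbove_right_injective (p := a) (hq ▸ hyp)))]
      rw [hsa, harg, hξ.swap _ p q hpq]
      ring

lemma isAlt_wedge1 {n M : ℕ} (w : Fin n → ℝ) {ξ : (Fin M → Fin n) → ℝ}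
    (hξ : IsAlt ξ) : IsAlt (wedge1 w ξ) := by
  apply isAlt_of_adjSwap
  intro J t
  unfold wedge1
  calc ∑ a : Fin (M + 1), (-1:ℝ) ^ (a:ℕ) * w ((J ∘ Equiv.swap t.castSucc t.succ) a)
        * ξ (fun b => (J ∘ Equiv.swap t.castSucc t.succ) (a.succAbove b))
      = ∑ a : Fin (M + 1), -((-1:ℝ) ^ ((Equiv.swap t.castSucc t.succ a : Fin (M+1)) : ℕ)
          * w (J (Equiv.swap t.castSucc t.succ a))
          * ξ (fun b => J ((Equiv.swap t.castSucc t.succ a).succAbove b))) :=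
        Finset.sum_congr rfl (fun a _ => wedge1_term_swap w hξ J t a)
    _ = -∑ a : Fin (M + 1), (-1:ℝ) ^ ((Equiv.swap t.castSucc t.succ a : Fin (M+1)) : ℕ)
          * w (J (Equiv.swap t.castSucc t.succ a))
          * ξ (fun b => J ((Equiv.swap t.castSucc t.succ a).succAbove b)) := by
        rw [Finset.sum_neg_distrib]
    _ = -∑ a : Fin (M + 1), (-1:ℝ) ^ ((a : Fin (M+1)) : ℕ) * w (J a)
          * ξ (fun b => J (a.succAbove b)) := by
        rw [Equiv.sum_comp (Equiv.swap t.castSucc t.succ)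
          (fun a => (-1:ℝ) ^ ((a : Fin (M+1)) : ℕ) * w (J a)
            * ξ (fun b => J (a.succAbove b)))]

lemma cartan {n M : ℕ} (w : Fin n → ℝ) (g : (Fin (M + 1) → Fin n) → ℝ)
    (J : Fin (M + 1) → Fin n) :
    wedge1 w (ctr w g) J + ctr w (wedge1 w g) J = (∑ j, w j * w j) * g J := by
  have hterm : ∀ j : Fin n, wedge1 w g (Fin.cons j J)
      = w j * g J + ∑ a : Fin (M + 1),
          -((-1 : ℝ) ^ (a : ℕ) * w (J a) * g (Fin.cons j fun c => J (a.succAbove c))) := by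
    intro j
    unfold wedge1
    rw [Fin.sum_univ_succ]
    congr 1
    · have h0 : (fun b => (Fin.cons j J : Fin (M + 2) → Fin n) ((0 : Fin (M+2)).succAbove b))
          = J := by
        funext b
        rw [Fin.succAbove_zero, Fin.cons_succ]
      rw [h0]
      simp
    · apply Finset.sum_congr rfl
      intro a _
      have h1 : (fun c => (Fin.cons j J : Fin (M + 2) → Fin n) (a.succ.succAbove c))
          = Fin.cons j (fun c => J (a.succAbove c)) := by
        funext c
        cases c using Fin.cases with
        | zero => rw [Fin.succ_succAbove_zero, Fin.cons_zero, Fin.cons_zero]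
        | succ d => rw [Fin.succ_succAbove_succ, Fin.cons_succ, Fin.cons_succ]
      rw [h1, Fin.cons_succ, Fin.val_succ, pow_succ]
      ring
  show wedge1 w (ctr w g) J + ∑ j, w j * wedge1 w g (Fin.cons j J) = _
  simp_rw [hterm, mul_add, Finset.mul_sum]
  rw [Finset.sum_add_distrib]
  have hw1 : wedge1 w (ctr w g) J
      = ∑ a : Fin (M + 1), ∑ j : Fin n,
          (-1 : ℝ) ^ (a : ℕ) * w (J a) * (w j * g (Fin.cons j fun b => J (a.succAbove b))) := by
    unfold wedge1 ctr
    apply Finset.sum_congr rfl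
    intro a _
    rw [Finset.mul_sum]
  rw [hw1, Finset.sum_comm]
  have hcancel : ∀ j : Fin n,
      (∑ a : Fin (M + 1),
          (-1 : ℝ) ^ (a : ℕ) * w (J a) * (w j * g (Fin.cons j fun b => J (a.succAbove b))))
        + ∑ a : Fin (M + 1),
            w j * -((-1 : ℝ) ^ (a : ℕ) * w (J a) * g (Fin.cons j fun c => J (a.succAbove c)))
      = 0 := by
    intro j
    rw [← Finset.sum_add_distrib]
    apply Finset.sum_eq_zero
    intro a _
    ring
  have hmain : (∑ j : Fin n, ∑ a : Fin (M + 1),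
        (-1 : ℝ) ^ (a : ℕ) * w (J a) * (w j * g (Fin.cons j fun b => J (a.succAbove b))))
      + (∑ j : Fin n, w j * (w j * g J)
        + ∑ j : Fin n, ∑ a : Fin (M + 1),
            w j * -((-1 : ℝ) ^ (a : ℕ) * w (J a) * g (Fin.cons j fun c => J (a.succAbove c))))
      = ∑ j : Fin n, w j * (w j * g J) := by
    have h2 : (∑ j : Fin n, ∑ a : Fin (M + 1),
          (-1 : ℝ) ^ (a : ℕ) * w (J a) * (w j * g (Fin.cons j fun b => J (a.succAbove b))))
        + ∑ j : Fin n, ∑ a : Fin (M + 1),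
            w j * -((-1 : ℝ) ^ (a : ℕ) * w (J a) * g (Fin.cons j fun c => J (a.succAbove c)))
        = 0 := by
      rw [← Finset.sum_add_distrib]
      exact Finset.sum_eq_zero fun j _ => hcancel j
    linarith
  rw [hmain, Finset.sum_mul]
  apply Finset.sum_congr rfl
  intro j _
  ring

lemma proj_bound {n M : ℕ} (w : Fin n → ℝ) (hw : (∑ j, w j * w j) = 1)
    {g : (Fin (M + 1) → Fin n) → ℝ} (hg : IsAlt g) :
    (M + 1 : ℝ) * ∑ K : Fin M → Fin n, ctr w g K * ctr w g K
      ≤ ∑ J : Fin (M + 1) → Fin n, g J * g J := by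
  have hadj := adjoint_wedge w (ctr w g) g hg
  have hadj2 := adjoint_wedge w g (wedge1 w g) (isAlt_wedge1 w hg)
  have hpos : 0 ≤ ∑ K : Fin (M + 1) → Fin n, g K * ctr w (wedge1 w g) K := by
    have h1 : (0:ℝ) ≤ ∑ J : Fin (M + 1 + 1) → Fin n, wedge1 w g J * wedge1 w g J :=
      Finset.sum_nonneg fun J _ => mul_self_nonneg _
    rw [hadj2] at h1
    exact (mul_nonneg_iff_of_pos_left (by positivity)).mp h1
  have hadj' : (M + 1 : ℝ) * ∑ K : Fin M → Fin n, ctr w g K * ctr w g K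
      = ∑ J : Fin (M + 1) → Fin n, wedge1 w (ctr w g) J * g J := by
    rw [hadj]
  rw [hadj']
  have hstep : ∀ J : Fin (M + 1) → Fin n,
      wedge1 w (ctr w g) J * g J = g J * g J - g J * ctr w (wedge1 w g) J := by
    intro J
    have h := cartan w g J
    rw [hw, one_mul] at h
    have h2 : wedge1 w (ctr w g) J = g J - ctr w (wedge1 w g) J := by linarith
    rw [h2]
    ring
  rw [Finset.sum_congr rfl (fun J _ => hstep J), Finset.sum_sub_distrib]
  linarith

lemma matrix_symm_sum {n : ℕ} (A : Matrix (Fin n) (Fin n) ℝ) (hA : A.IsHermitian)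
    (x y : Fin n → ℝ) :
    ∑ j, x j * A.mulVec y j = ∑ j, A.mulVec x j * y j := by
  unfold Matrix.mulVec dotProduct
  simp_rw [Finset.mul_sum, Finset.sum_mul]
  rw [Finset.sum_comm]
  apply Finset.sum_congr rfl; intro j _
  apply Finset.sum_congr rfl; intro i _
  have hij : A i j = A j i := by
    have := congrFun (congrFun hA j) i
    simpa [Matrix.conjTranspose_apply] using this
  rw [hij]
  ring

lemma pointwise_spectral {n : ℕ} (A : Matrix (Fin n) (Fin n) ℝ) (hA : A.IsHermitian)
    (v : EuclideanSpace ℝ (Fin n)) :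
    ∑ j, ∑ i, A j i * v j * v i
      = ∑ k, hA.eigenvalues k * ((∑ j, hA.eigenvectorBasis k j * v j) *
          (∑ j, hA.eigenvectorBasis k j * v j)) := by
  have hq : ∑ j, ∑ i, A j i * v j * v i
      = (inner ℝ v (WithLp.toLp 2 (A.mulVec v : Fin n → ℝ) : EuclideanSpace ℝ (Fin n)) : ℝ) := by
    simp only [PiLp.inner_apply, RCLike.inner_apply', conj_trivial]
    apply Finset.sum_congr rfl; intro j _
    show _ = v j * A.mulVec v j
    unfold Matrix.mulVec dotProduct
    rw [Finset.mul_sum]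
    apply Finset.sum_congr rfl; intro i _
    ring
  rw [hq, ← hA.eigenvectorBasis.sum_inner_mul_inner v _]
  apply Finset.sum_congr rfl; intro k _
  have h1 : (inner ℝ (hA.eigenvectorBasis k)
        (WithLp.toLp 2 (A.mulVec v : Fin n → ℝ) : EuclideanSpace ℝ (Fin n)) : ℝ)
      = hA.eigenvalues k * ∑ j, hA.eigenvectorBasis k j * v j := by
    simp only [PiLp.inner_apply, RCLike.inner_apply', conj_trivial]
    have hms : ∑ j, hA.eigenvectorBasis k j * (A.mulVec v : Fin n → ℝ) j
        = ∑ j, A.mulVec (⇑(hA.eigenvectorBasis k)) j * v j :=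
      matrix_symm_sum A hA _ v
    rw [hms, hA.mulVec_eigenvectorBasis k, Finset.mul_sum]
    apply Finset.sum_congr rfl; intro j _
    show (hA.eigenvalues k • ⇑(hA.eigenvectorBasis k)) j * v j = _
    simp [mul_assoc]
  have h2 : (inner ℝ v (hA.eigenvectorBasis k) : ℝ)
      = ∑ j, hA.eigenvectorBasis k j * v j := by
    simp only [PiLp.inner_apply, RCLike.inner_apply', conj_trivial]
    apply Finset.sum_congr rfl; intro j _
    simp [mul_comm]
  rw [h1, h2]
  ring

lemma bathtub {n p : ℕ} (hp : 0 < p) (lam : Fin n → ℝ)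
    (hlam : ∀ s : Finset (Fin n), s.card = p → 0 ≤ ∑ i ∈ s, lam i)
    (c : Fin n → ℝ) (C : ℝ) (hc0 : ∀ k, 0 ≤ c k) (hcC : ∀ k, c k ≤ C)
    (hsum : ∑ k, c k = p * C) : 0 ≤ ∑ k, lam k * c k := by
  rcases Nat.eq_zero_or_pos n with hn | hn
  · subst hn
    simp
  rcases le_or_gt C 0 with hC | hC
  · have hall : ∀ k, c k = 0 := fun k => le_antisymm ((hcC k).trans hC) (hc0 k)
    simp [hall]
  have hpn : p ≤ n := by
    have h2 : (∑ k : Fin n, c k) ≤ ∑ k : Fin n, C := Finset.sum_le_sum fun k _ => hcC k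
    rw [Finset.sum_const, Finset.card_univ, Fintype.card_fin, nsmul_eq_mul] at h2
    have : (p : ℝ) ≤ (n : ℝ) := by
      rw [← mul_le_mul_iff_left₀ hC]
      linarith
    exact_mod_cast this
  set σ := Tuple.sort lam with hσ
  have hmono : Monotone (lam ∘ σ) := Tuple.monotone_sort lam
  have hplt : p - 1 < n := by omega
  set t := lam (σ ⟨p - 1, hplt⟩) with ht
  set s : Finset (Fin n) :=
    Finset.image (fun i : Fin p => σ (Fin.castLE hpn i)) Finset.univ with hsdef
  have hcard : s.card = p := by
    rw [hsdef, Finset.card_image_of_injective _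
      (show Function.Injective (fun i : Fin p => σ (Fin.castLE hpn i)) from
        σ.injective.comp (Fin.castLE_injective hpn)),
      Finset.card_univ, Fintype.card_fin]
  have hmem_le : ∀ k ∈ s, lam k ≤ t := by
    intro k hk
    rw [hsdef, Finset.mem_image] at hk
    obtain ⟨i, _, rfl⟩ := hk
    exact hmono (show Fin.castLE hpn i ≤ ⟨p - 1, hplt⟩ from by
      rw [Fin.le_def]; simp; omega)
  have hnmem_ge : ∀ k ∉ s, t ≤ lam k := by
    intro k hk
    have hkv : p ≤ ((σ.symm k : Fin n) : ℕ) := by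
      by_contra hcon
      push_neg at hcon
      apply hk
      rw [hsdef, Finset.mem_image]
      refine ⟨⟨(σ.symm k : Fin n), hcon⟩, Finset.mem_univ _, ?_⟩
      have heqk : Fin.castLE hpn ⟨((σ.symm k : Fin n) : ℕ), hcon⟩ = σ.symm k := by
        apply Fin.ext; simp
      rw [heqk, Equiv.apply_symm_apply]
    have heq2 : lam (σ (σ.symm k)) = lam k := by rw [Equiv.apply_symm_apply]
    rw [← heq2]
    exact hmono (show (⟨p - 1, hplt⟩ : Fin n) ≤ σ.symm k from by
      rw [Fin.le_def]; simp; omega)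
  have hexpand : ∑ k, lam k * c k
      = (∑ k, (lam k - t) * c k) + t * ∑ k, c k := by
    rw [Finset.mul_sum, ← Finset.sum_add_distrib]
    exact Finset.sum_congr rfl fun k _ => by ring
  have hsplit : (∑ k ∈ s, (lam k - t) * c k) + ∑ k ∈ sᶜ, (lam k - t) * c k
      = ∑ k, (lam k - t) * c k := Finset.sum_add_sum_compl s _
  have hbnd1 : ∑ k ∈ s, (lam k - t) * C ≤ ∑ k ∈ s, (lam k - t) * c k := by
    apply Finset.sum_le_sum
    intro k hk
    exact mul_le_mul_of_nonpos_left (hcC k) (by linarith [hmem_le k hk])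
  have hbnd2 : (0:ℝ) ≤ ∑ k ∈ sᶜ, (lam k - t) * c k := by
    apply Finset.sum_nonneg
    intro k hk
    rw [Finset.mem_compl] at hk
    exact mul_nonneg (by linarith [hnmem_ge k hk]) (hc0 k)
  have hs_val : ∑ k ∈ s, (lam k - t) * C = (∑ k ∈ s, lam k) * C - p * t * C := by
    rw [← Finset.sum_mul, Finset.sum_sub_distrib, Finset.sum_const, hcard, nsmul_eq_mul]
    ring
  have hlam_s : 0 ≤ ∑ k ∈ s, lam k := hlam s hcard
  have h0C : 0 ≤ (∑ k ∈ s, lam k) * C := mul_nonneg hlam_s hC.le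
  rw [hexpand, hsum]
  nlinarith [hbnd1, hbnd2, hsplit, hs_val]

lemma spectral_nonneg {n M : ℕ} (A : Matrix (Fin n) (Fin n) ℝ) (hA : A.IsHermitian)
    (hpsd : ∀ s : Finset (Fin n), s.card = M + 1 → 0 ≤ ∑ i ∈ s, hA.eigenvalues i)
    {g : (Fin (M + 1) → Fin n) → ℝ} (hg : IsAlt g) :
    0 ≤ ∑ K : Fin M → Fin n, ∑ j : Fin n, ∑ i : Fin n,
        A j i * g (Fin.cons j K) * g (Fin.cons i K) := by
  set T := ∑ J : Fin (M + 1) → Fin n, g J * g J with hT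
  have hT0 : 0 ≤ T := Finset.sum_nonneg fun J _ => mul_self_nonneg _
  set d : Fin n → (Fin M → Fin n) → ℝ :=
    fun k K => ∑ j, hA.eigenvectorBasis k j * g (Fin.cons j K) with hd
  set c : Fin n → ℝ := fun k => ∑ K, d k K * d k K with hc
  have hKq : ∀ K : Fin M → Fin n,
      ∑ j : Fin n, ∑ i : Fin n, A j i * g (Fin.cons j K) * g (Fin.cons i K)
        = ∑ k, hA.eigenvalues k * (d k K * d k K) := by
    intro K
    exact pointwise_spectral A hA (WithLp.toLp 2 (fun j => g (Fin.cons j K)) : EuclideanSpace ℝ (Fin n))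
  rw [Finset.sum_congr rfl fun K _ => hKq K, Finset.sum_comm]
  have hck : ∀ k, ∑ K : Fin M → Fin n, hA.eigenvalues k * (d k K * d k K)
      = hA.eigenvalues k * c k := fun k => (Finset.mul_sum _ _ _).symm
  rw [Finset.sum_congr rfl fun k _ => hck k]
  -- prepare for bathtub
  have hsumT : ∀ K : Fin M → Fin n, ∑ k, d k K * d k K
      = ∑ j, g (Fin.cons j K) * g (Fin.cons j K) := by
    intro K
    set v : EuclideanSpace ℝ (Fin n) := WithLp.toLp 2 (fun j => g (Fin.cons j K)) with hv
    have h1 : ∀ k, d k K = (inner ℝ v (hA.eigenvectorBasis k) : ℝ) := by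
      intro k
      simp only [PiLp.inner_apply, RCLike.inner_apply', conj_trivial]
      exact Finset.sum_congr rfl fun j _ => mul_comm _ _
    have h2 : ∀ k, d k K = (inner ℝ (hA.eigenvectorBasis k) v : ℝ) := by
      intro k
      simp only [PiLp.inner_apply, RCLike.inner_apply', conj_trivial]
      rfl
    calc ∑ k, d k K * d k K
        = ∑ k, (inner ℝ v (hA.eigenvectorBasis k) : ℝ) * inner ℝ (hA.eigenvectorBasis k) v := by
          apply Finset.sum_congr rfl
          intro k _
          rw [← h1 k, ← h2 k]
      _ = (inner ℝ v v : ℝ) := hA.eigenvectorBasis.sum_inner_mul_inner v v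
      _ = ∑ j, g (Fin.cons j K) * g (Fin.cons j K) := by
          simp only [PiLp.inner_apply, RCLike.inner_apply', conj_trivial]
          rfl
  have hTsplit : T = ∑ K : Fin M → Fin n, ∑ j, g (Fin.cons j K) * g (Fin.cons j K) := by
    rw [hT, sum_insertNth (0 : Fin (M + 1)), Finset.sum_comm]
    apply Finset.sum_congr rfl
    intro K _
    apply Finset.sum_congr rfl
    intro j _
    have hz : (Fin.insertNth 0 j K : Fin (M + 1) → Fin n) = Fin.cons j K :=
      Fin.insertNth_zero' j K
    rw [hz]
  have hcsum : ∑ k, c k = (M + 1 : ℝ) * (T / (M + 1 : ℝ)) := by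
    rw [mul_div_cancel₀ _ (by positivity)]
    simp only [hc]
    rw [Finset.sum_comm, hTsplit]
    exact Finset.sum_congr rfl fun K _ => hsumT K
  have hc0 : ∀ k, 0 ≤ c k := fun k => Finset.sum_nonneg fun K _ => mul_self_nonneg _
  have hcC : ∀ k, c k ≤ T / (M + 1 : ℝ) := by
    intro k
    rw [le_div_iff₀ (by positivity : (0:ℝ) < (M + 1 : ℝ))]
    have hw1 : (∑ j, hA.eigenvectorBasis k j * hA.eigenvectorBasis k j) = 1 := by
      have horth := orthonormal_iff_ite.mp hA.eigenvectorBasis.orthonormal k k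
      simp only [PiLp.inner_apply, RCLike.inner_apply', conj_trivial, if_pos rfl] at horth
      simpa using horth
    have := proj_bound (fun j => hA.eigenvectorBasis k j) hw1 hg
    rw [mul_comm (c k) _]
    exact this
  have := bathtub (Nat.succ_pos M) hA.eigenvalues hpsd c (T / (M + 1 : ℝ)) hc0 hcC
    (by rw [hcsum]; push_cast; ring)
  exact this

lemma coercivity {n m : ℕ} (θ : Matrix (Fin n) (Fin n) ℝ) (τ : Fin n → ℝ)
    (hH : (θ - Matrix.vecMulVec τ τ).IsHermitian)
    (hpsd : ∀ s : Finset (Fin n), s.card = m + 1 → 0 ≤ ∑ i ∈ s, hH.eigenvalues i)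
    {g : (Fin (m + 1) → Fin n) → ℝ} (hg : IsAlt g) :
    (m + 1 : ℝ) * ∑ K : Fin m → Fin n, ctr τ g K * ctr τ g K
      ≤ ∑ J : Fin (m + 1) → Fin n, FopMat θ g J * g J := by
  rw [quadform θ g hg]
  have hspec := spectral_nonneg (θ - Matrix.vecMulVec τ τ) hH hpsd hg
  have hsplit : ∀ K : Fin m → Fin n,
      (∑ j : Fin n, ∑ i : Fin n, θ j i * g (Fin.cons j K) * g (Fin.cons i K))
        = (∑ j : Fin n, ∑ i : Fin n,
            (θ - Matrix.vecMulVec τ τ) j i * g (Fin.cons j K) * g (Fin.cons i K))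
          + ctr τ g K * ctr τ g K := by
    intro K
    have hc : ctr τ g K * ctr τ g K
        = ∑ j : Fin n, ∑ i : Fin n, τ j * τ i * g (Fin.cons j K) * g (Fin.cons i K) := by
      unfold ctr
      rw [Finset.sum_mul_sum]
      apply Finset.sum_congr rfl; intro j _
      apply Finset.sum_congr rfl; intro i _
      ring
    rw [hc, ← Finset.sum_add_distrib]
    apply Finset.sum_congr rfl; intro j _
    rw [← Finset.sum_add_distrib]
    apply Finset.sum_congr rfl; intro i _
    simp only [Matrix.sub_apply, Matrix.vecMulVec_apply]
    ring
  rw [Finset.sum_congr rfl fun K _ => hsplit K, Finset.sum_add_distrib]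
  nlinarith [hspec]

lemma sum_CS {ι : Type*} [Fintype ι] (f g : ι → ℝ) :
    ∑ i, f i * g i
      ≤ Real.sqrt (∑ i, f i * f i) * Real.sqrt (∑ i, g i * g i) := by
  have h := Finset.sum_mul_sq_le_sq_mul_sq Finset.univ f g
  calc ∑ i, f i * g i ≤ |∑ i, f i * g i| := le_abs_self _
    _ = Real.sqrt ((∑ i, f i * g i) ^ 2) := (Real.sqrt_sq_eq_abs _).symm
    _ ≤ Real.sqrt ((∑ i, f i ^ 2) * ∑ i, g i ^ 2) := Real.sqrt_le_sqrt h
    _ = Real.sqrt (∑ i, f i * f i) * Real.sqrt (∑ i, g i * g i) := by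
      rw [Real.sqrt_mul (Finset.sum_nonneg fun i _ => sq_nonneg _),
        show (∑ i, f i ^ 2) = ∑ i, f i * f i from
          Finset.sum_congr rfl fun i _ => pow_two _,
        show (∑ i, g i ^ 2) = ∑ i, g i * g i from
          Finset.sum_congr rfl fun i _ => pow_two _]

/-- First inequality, as a standalone statement. -/
lemma main_CS {n m : ℕ} (θ : Matrix (Fin n) (Fin n) ℝ) (τ : Fin n → ℝ)
    (hH : (θ - Matrix.vecMulVec τ τ).IsHermitian)
    (hpsd : ∀ s : Finset (Fin n), s.card = m + 1 → 0 ≤ ∑ i ∈ s, hH.eigenvalues i)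
    (ξ : (Fin m → Fin n) → ℝ)
    (u : (Fin (m + 1) → Fin n) → ℝ) (hu : IsAlt u) :
    innerF u (wedge1 τ ξ)
      ≤ Real.sqrt (innerF u (FopMat θ u)) * Real.sqrt (innerF ξ ξ) := by
  set X := ∑ K : Fin m → Fin n, ξ K * ctr τ u K with hX
  set Aq := ∑ K : Fin m → Fin n, ξ K * ξ K with hAq
  set B := ∑ K : Fin m → Fin n, ctr τ u K * ctr τ u K with hB
  set D := ∑ J : Fin (m + 1) → Fin n, FopMat θ u J * u J with hD
  have hA0 : 0 ≤ Aq := Finset.sum_nonneg fun K _ => mul_self_nonneg _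
  have hB0 : 0 ≤ B := Finset.sum_nonneg fun K _ => mul_self_nonneg _
  have hcoer : (m + 1 : ℝ) * B ≤ D := coercivity θ τ hH hpsd hu
  have hD0 : 0 ≤ D := le_trans (mul_nonneg (by positivity)
    (Finset.sum_nonneg fun K _ => mul_self_nonneg _)) hcoer
  have hCS : X ≤ Real.sqrt Aq * Real.sqrt B := sum_CS ξ (ctr τ u)
  -- rewrite the LHS
  have hadj := adjoint_wedge τ ξ u hu
  have hLHS : innerF u (wedge1 τ ξ) = ((m.factorial : ℝ))⁻¹ * X := by
    unfold innerF
    rw [Finset.sum_congr rfl fun J _ => mul_comm (u J) (wedge1 τ ξ J), hadj]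
    rw [← hX, Nat.factorial_succ]
    push_cast
    rw [mul_inv]
    field_simp
  have hRHS : innerF u (FopMat θ u) = (((m + 1).factorial : ℝ))⁻¹ * D := by
    unfold innerF
    rw [Finset.sum_congr rfl fun J _ => mul_comm (u J) (FopMat θ u J)]
  rw [hLHS, hRHS]
  have hrfac : (0:ℝ) < (m.factorial : ℝ) := by positivity
  have hqfac : ((m + 1).factorial : ℝ) = ((m + 1 : ℕ) : ℝ) * (m.factorial : ℝ) := by
    rw [Nat.factorial_succ]; push_cast; ring
  have hBD : B ≤ D * ((m : ℝ) + 1)⁻¹ := by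
    rw [show D * ((m:ℝ) + 1)⁻¹ = D / ((m:ℝ) + 1) from (div_eq_mul_inv D _).symm,
      le_div_iff₀ (by positivity : (0:ℝ) < ((m:ℝ) + 1))]
    linarith [hcoer, mul_comm B ((m:ℝ) + 1)]
  calc ((m.factorial : ℝ))⁻¹ * X
      ≤ ((m.factorial : ℝ))⁻¹ * (Real.sqrt Aq * Real.sqrt B) := by
        apply mul_le_mul_of_nonneg_left hCS (by positivity)
    _ ≤ ((m.factorial : ℝ))⁻¹ * (Real.sqrt Aq * Real.sqrt (D * ((m : ℝ) + 1)⁻¹)) := by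
        apply mul_le_mul_of_nonneg_left ?_ (by positivity)
        apply mul_le_mul_of_nonneg_left (Real.sqrt_le_sqrt hBD) (Real.sqrt_nonneg _)
    _ = Real.sqrt ((((m + 1).factorial : ℝ))⁻¹ * D) * Real.sqrt ((m.factorial : ℝ)⁻¹ * Aq) := by
        rw [Real.sqrt_mul (by positivity) D, Real.sqrt_mul (by positivity) Aq,
          Real.sqrt_mul (by positivity : (0:ℝ) ≤ D) (((m:ℝ)+1)⁻¹), hqfac]
        rw [show ((((m+1 : ℕ)) : ℝ) * (m.factorial : ℝ))⁻¹
            = ((m.factorial : ℝ))⁻¹ * (((m:ℝ)+1))⁻¹ from by push_cast; rw [mul_inv]; ring,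
          Real.sqrt_mul (by positivity) (((m:ℝ)+1)⁻¹)]
        have hrr : Real.sqrt ((m.factorial : ℝ))⁻¹ * Real.sqrt ((m.factorial : ℝ))⁻¹
            = ((m.factorial : ℝ))⁻¹ := Real.mul_self_sqrt (by positivity)
        linear_combination (- (Real.sqrt Aq * Real.sqrt D
          * Real.sqrt (((m:ℝ) + 1)⁻¹))) * hrr

theorem stmt6 (n m : ℕ) (θ : Matrix (Fin n) (Fin n) ℝ) (hθ : θ.IsSymm)
    (τ : Fin n → ℝ)
    (hH : (θ - Matrix.vecMulVec τ τ).IsHermitian)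
    (hpsd : ∀ s : Finset (Fin n), s.card = m + 1 → 0 ≤ ∑ i ∈ s, hH.eigenvalues i)
    (ξ : (Fin m → Fin n) → ℝ) (hξ : IsAlt ξ)
    (u : (Fin (m + 1) → Fin n) → ℝ) (hu : IsAlt u)
    (huIm : ∃ w, IsAlt w ∧ FopMat θ w = u)
    (h : (Fin (m + 1) → Fin n) → ℝ) (hh : IsAlt h)
    (hhIm : ∃ w, IsAlt w ∧ FopMat θ w = h)
    (hhw : FopMat θ h = wedge1 τ ξ) :
    innerF u (wedge1 τ ξ)
        ≤ Real.sqrt (innerF u (FopMat θ u)) * Real.sqrt (innerF ξ ξ) ∧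
    innerF h (wedge1 τ ξ) ≤ innerF ξ ξ := by
  have hξξ : innerF ξ ξ = ((m.factorial : ℝ))⁻¹ * ∑ K : Fin m → Fin n, ξ K * ξ K := rfl
  have hξ0 : 0 ≤ innerF ξ ξ := by
    rw [hξξ]
    have h0 : 0 ≤ ∑ K : Fin m → Fin n, ξ K * ξ K :=
      Finset.sum_nonneg fun K _ => mul_self_nonneg _
    exact mul_nonneg (by positivity) h0
  have part1 : innerF u (wedge1 τ ξ)
      ≤ Real.sqrt (innerF u (FopMat θ u)) * Real.sqrt (innerF ξ ξ) :=
    main_CS θ τ hH hpsd ξ u hu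
  refine ⟨part1, ?_⟩
  have part1h : innerF h (wedge1 τ ξ)
      ≤ Real.sqrt (innerF h (FopMat θ h)) * Real.sqrt (innerF ξ ξ) :=
    main_CS θ τ hH hpsd ξ h hh
  rw [hhw] at part1h
  -- x ≤ sqrt x * sqrt c with x ≥ 0
  set x := innerF h (wedge1 τ ξ) with hx
  have hx0 : 0 ≤ x := by
    rw [hx, ← hhw]
    unfold innerF
    rw [Finset.sum_congr rfl fun J _ => mul_comm (h J) (FopMat θ h J)]
    have hco := coercivity θ τ hH hpsd hh
    have h1 : (0:ℝ) ≤ ∑ J : Fin (m + 1) → Fin n, FopMat θ h J * h J :=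
      le_trans (mul_nonneg (by positivity)
        (Finset.sum_nonneg fun K _ => mul_self_nonneg _)) hco
    exact mul_nonneg (by positivity) h1
  have hsq : Real.sqrt x * Real.sqrt x = x := Real.mul_self_sqrt hx0
  have hsqc : Real.sqrt (innerF ξ ξ) * Real.sqrt (innerF ξ ξ) = innerF ξ ξ :=
    Real.mul_self_sqrt hξ0
  nlinarith [part1h, hsq, hsqc, Real.sqrt_nonneg x, Real.sqrt_nonneg (innerF ξ ξ),
    sq_nonneg (Real.sqrt x - Real.sqrt (innerF ξ ξ))]
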